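/- Let k ≥ 1 and let S, N, D : Fin k → ℕ with S_j ≥ 1 for all j. Let R be a commutative ring and, for each j ∈ Fin k and i ∈ Fin (S_j), let a_{j,i}, b_{j,i} ∈ R. Let ι = Σ j, Fin (S_j) and define the square matrix M over R with rows and columns indexed by ι ⊕ ι (relator rows inl(j,i) and commutator rows inr(j,i); a-columns inl(j,i) and b-columns inr(j,i)) by: relator row (j,i) has −g_{N_j}(a_{j,i}) in a-column (j,i) and −(a_{j,i})^{N_j}·g_{D_j}(b_{j,i}) in b-column (j,i), and, when j ≥ 1, additionally has +g_{N_j}(a_{j−1,L}) in a-column (j−1,L) and +(a_{j−1,L})^{N_j}·g_{D_j}(b_{j−1,L}) in b-column (j−1,L), where L = S_{j−1}−1 is the last index of family j−1; commutator row (j,i) has 1 − b_{j,i} in a-column (j,i) and a_{j,i} − 1 in b-column (j,i); all other entries are 0. Then det M = ∏_{j ∈ Fin k} ∏_{i ∈ Fin (S_j)} (1 − (a_{j,i})^{N_j}·(b_{j,i})^{D_j}). (This is the Type I minor of the Alexander matrix of the surgerized tst link [Φ_{j=1}^k(n(τ_j), d(τ_j), M_j, μ_j)] with M_k odd, obtained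 by deleting the column of a₀.) -/

import Mathlib

/-- The geometric sum `g_m(x) = ∑_{k=0}^{m-1} xᵏ`, the group-ring analogue of `(1-xᵐ)/(1-x)`. -/
def geomSum {R : Type*} [CommRing R] (m : ℕ) (x : R) : R := ∑ k ∈ Finset.range m, x ^ k

/-- Determinant of a matrix on a two-element type. -/
lemma det_pair {R : Type*} [CommRing R] {m : Type*} [DecidableEq m] [Fintype m]
    (A : Matrix m m R) (x y : m) (hxy : x ≠ y) (huniv : ∀ z : m, z = x ∨ z = y) :
    A.det = A x x * A y y - A x y * A y x := by
  let e : Fin 2 ≃ m :=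
    { toFun := ![x, y]
      invFun := fun z => if z = x then 0 else 1
      left_inv := by
        intro i
        fin_cases i <;> simp [hxy.symm, Ne.symm hxy]
      right_inv := by
        intro z
        rcases huniv z with h | h <;> subst h <;> simp [hxy.symm, Ne.symm hxy] }
  rw [← Matrix.det_submatrix_equiv_self e A, Matrix.det_fin_two]
  simp [e, Matrix.submatrix]

open Matrix in
/-- Type I minor of the Alexander matrix of a surgerized tst link with `M_k` odd,
obtained by deleting the column of `a₀`.  Rows `Sum.inl ⟨j,i⟩` are the relator rows,
rows `Sum.inr ⟨j,i⟩` the commutator rows; columns `Sum.inl` are the `a`-columns and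
columns `Sum.inr` the `b`-columns. -/
theorem typeI_minor_stst_odd {R : Type*} [CommRing R] (k : ℕ) (hk : 1 ≤ k)
    (S N D : Fin k → ℕ) (hS : ∀ j, 1 ≤ S j)
    (a b : (j : Fin k) → Fin (S j) → R)
    (M : Matrix ((Σ j : Fin k, Fin (S j)) ⊕ (Σ j : Fin k, Fin (S j)))
                ((Σ j : Fin k, Fin (S j)) ⊕ (Σ j : Fin k, Fin (S j))) R)
    (h_ra : ∀ (j : Fin k) (i : Fin (S j)) (p : Σ j' : Fin k, Fin (S j')),
      M (Sum.inl ⟨j, i⟩) (Sum.inl p) =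
        if p = ⟨j, i⟩ then -(geomSum (N j) (a j i))
        else if 1 ≤ (j : ℕ) ∧ (p.1 : ℕ) + 1 = (j : ℕ) ∧ (p.2 : ℕ) + 1 = S p.1 then
          geomSum (N j) (a p.1 p.2)
        else 0)
    (h_rb : ∀ (j : Fin k) (i : Fin (S j)) (p : Σ j' : Fin k, Fin (S j')),
      M (Sum.inl ⟨j, i⟩) (Sum.inr p) =
        if p = ⟨j, i⟩ then -((a j i) ^ (N j) * geomSum (D j) (b j i))
        else if 1 ≤ (j : ℕ) ∧ (p.1 : ℕ) + 1 = (j : ℕ) ∧ (p.2 : ℕ) + 1 = S p.1 then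
          (a p.1 p.2) ^ (N j) * geomSum (D j) (b p.1 p.2)
        else 0)
    (h_sa : ∀ (j : Fin k) (i : Fin (S j)) (p : Σ j' : Fin k, Fin (S j')),
      M (Sum.inr ⟨j, i⟩) (Sum.inl p) = if p = ⟨j, i⟩ then 1 - b j i else 0)
    (h_sb : ∀ (j : Fin k) (i : Fin (S j)) (p : Σ j' : Fin k, Fin (S j')),
      M (Sum.inr ⟨j, i⟩) (Sum.inr p) = if p = ⟨j, i⟩ then a j i - 1 else 0) :
    M.det = ∏ j : Fin k, ∏ i : Fin (S j), (1 - (a j i) ^ (N j) * (b j i) ^ (D j)) := by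
  classical
  let f : (Σ j : Fin k, Fin (S j)) → Lex (ℕ × ℕ) := fun p => toLex ((p.1 : ℕ), (p.2 : ℕ))
  have hf : Function.Injective f := by
    rintro ⟨j1, i1⟩ ⟨j2, i2⟩ h
    have h1 : (j1 : ℕ) = (j2 : ℕ) := congrArg (fun q => (ofLex q).1) h
    have hj : j1 = j2 := Fin.ext h1
    subst hj
    have h2 : (i1 : ℕ) = (i2 : ℕ) := congrArg (fun q => (ofLex q).2) h
    have hi : i1 = i2 := Fin.ext h2
    rw [hi]
  let w : (Σ j : Fin k, Fin (S j)) ⊕ (Σ j : Fin k, Fin (S j)) → Lex (ℕ × ℕ) := fun x => f (Sum.elim id id x)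
  -- Mᵀ is block upper triangular w.r.t. w
  have hBT : Mᵀ.BlockTriangular w := by
    rintro x y h
    show M y x = 0
    rcases y with p | p <;> obtain ⟨j, i⟩ := p <;> rcases x with q | q
    · rw [h_ra]
      rw [if_neg, if_neg]
      · rintro ⟨-, h2, -⟩
        have : w (Sum.inl q) < w (Sum.inl (⟨j, i⟩ : Σ j : Fin k, Fin (S j))) := by
          simp only [w, f, Sum.elim_inl, id_eq]
          rw [Prod.Lex.lt_iff]
          exact Or.inl (by simp only [ofLex_toLex]; omega)
        exact absurd h (asymm this)
      · rintro rfl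
        exact absurd h (lt_irrefl _)
    · rw [h_rb]
      rw [if_neg, if_neg]
      · rintro ⟨-, h2, -⟩
        have : w (Sum.inr q) < w (Sum.inl (⟨j, i⟩ : Σ j : Fin k, Fin (S j))) := by
          simp only [w, f, Sum.elim_inl, Sum.elim_inr, id_eq]
          rw [Prod.Lex.lt_iff]
          exact Or.inl (by simp only [ofLex_toLex]; omega)
        exact absurd h (asymm this)
      · rintro rfl
        exact absurd h (lt_irrefl _)
    · rw [h_sa, if_neg]
      rintro rfl
      exact absurd h (lt_irrefl _)
    · rw [h_sb, if_neg]
      rintro rfl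
      exact absurd h (lt_irrefl _)
  rw [← Matrix.det_transpose M, hBT.det]
  have himg : (Finset.univ : Finset ((Σ j : Fin k, Fin (S j)) ⊕ (Σ j : Fin k, Fin (S j)))).image w = (Finset.univ : Finset (Σ j : Fin k, Fin (S j))).image f := by
    have : (Finset.univ : Finset ((Σ j : Fin k, Fin (S j)) ⊕ (Σ j : Fin k, Fin (S j)))).image (Sum.elim id id) = (Finset.univ : Finset (Σ j : Fin k, Fin (S j))) :=
      Finset.image_univ_of_surjective (by rintro x; exact ⟨Sum.inl x, rfl⟩)
    rw [show w = f ∘ (Sum.elim id id) from rfl, ← Finset.image_image, this]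
  rw [himg, Finset.prod_image (fun x _ y _ h => hf h)]
  have hblock : ∀ p : (Σ j : Fin k, Fin (S j)), (Mᵀ.toSquareBlock w (f p)).det
      = 1 - (a p.1 p.2) ^ (N p.1) * (b p.1 p.2) ^ (D p.1) := by
    rintro ⟨j, i⟩
    have hmem : ∀ z : (Σ j : Fin k, Fin (S j)) ⊕ (Σ j : Fin k, Fin (S j)), w z = f ⟨j, i⟩ → (z = Sum.inl ⟨j, i⟩ ∨ z = Sum.inr ⟨j, i⟩) := by
      rintro (q | q) hz
      · exact Or.inl (congrArg Sum.inl (hf hz))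
      · exact Or.inr (congrArg Sum.inr (hf hz))
    have hx : w (Sum.inl (⟨j, i⟩ : Σ j : Fin k, Fin (S j))) = f ⟨j, i⟩ := rfl
    have hy : w (Sum.inr (⟨j, i⟩ : Σ j : Fin k, Fin (S j))) = f ⟨j, i⟩ := rfl
    rw [det_pair _ ⟨Sum.inl ⟨j, i⟩, hx⟩ ⟨Sum.inr ⟨j, i⟩, hy⟩
      (by simp) (by rintro ⟨z, hz⟩
                    rcases hmem z hz with h | h <;> [left; right] <;> exact Subtype.ext h)]
    simp only [Matrix.toSquareBlock_def, Matrix.of_apply, Matrix.transpose_apply]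
    rw [h_ra j i ⟨j, i⟩, h_rb j i ⟨j, i⟩, h_sa j i ⟨j, i⟩, h_sb j i ⟨j, i⟩,
      if_pos rfl, if_pos rfl, if_pos rfl, if_pos rfl]
    have h1 : geomSum (N j) (a j i) * (a j i - 1) = a j i ^ N j - 1 := by
      simpa [geomSum] using geom_sum_mul (a j i) (N j)
    have h2 : geomSum (D j) (b j i) * (b j i - 1) = b j i ^ D j - 1 := by
      simpa [geomSum] using geom_sum_mul (b j i) (D j)
    linear_combination -h1 - (a j i) ^ (N j) * h2
  rw [Finset.prod_congr rfl (fun p _ => hblock p)]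
  rw [← Finset.prod_sigma (Finset.univ) (fun _ => Finset.univ)
    (fun p : (Σ j : Fin k, Fin (S j)) => 1 - (a p.1 p.2) ^ (N p.1) * (b p.1 p.2) ^ (D p.1))]
  rfl
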